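/- arXiv:2204.03892 — 2 statements merged into one kernel-verified Lean document; each statement's English description precedes it below -/
import Mathlib

section
/- For the morphism σ̃ : a ↦ ba, b ↦ a (reversed Fibonacci morphism) with t the unique left-special sequence of the Fibonacci shift (the fixed point of σ : a ↦ ab, b ↦ a), one has t = σ̃(bt) = S σ̃(at); more generally, setting F_n = |σ̃^{n−1}(b)|, for every n ≥ 1 and every 0 ≤ i < F_{n+1}, the sequence S^i σ̃ⁿ(bt) has the two distinct σ̃ⁿ-representations (σ̃ⁿ(bt), i) and (σ̃ⁿ(at), F_n + i). Hence the number of points at which a morphism fails one-sided recognizability can be arbitrarily large. -/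
open scoped Classical

noncomputable section

variable {A B : Type*}

/-- The two-sided shift map. -/
def shiftZ (x : ℤ → A) : ℤ → A := fun n => x (n + 1)

/-- The one-sided shift map. -/
def shiftN (x : ℕ → A) : ℕ → A := fun n => x (n + 1)

/-- The one-sided sequence `x⁺` associated to a two-sided sequence. -/
def plusSeq (x : ℤ → A) : ℕ → A := fun n => x (n : ℤ)

/-- The one-sided shift space `X⁺` associated to a set of two-sided sequences. -/
def SetPlus (X : Set (ℤ → A)) : Set (ℕ → A) := plusSeq '' X

/-- `X` is a (two-sided) shift space: closed and shift invariant. -/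
def IsShiftZ [TopologicalSpace A] (X : Set (ℤ → A)) : Prop :=
  IsClosed X ∧ shiftZ '' X = X

/-- `X` is a one-sided shift space: closed and shift invariant. -/
def IsShiftN [TopologicalSpace A] (X : Set (ℕ → A)) : Prop :=
  IsClosed X ∧ shiftN '' X = X

/-- Image of a word under a morphism given by its values on letters. -/
def wordImg (σ : A → List B) (w : List A) : List B := (w.map σ).flatten

/-- `σ(x₀ ⋯ x_{n-1})` for a one-sided sequence `x`. -/
def prefixImg (σ : A → List B) (x : ℕ → A) (n : ℕ) : List B :=
  wordImg σ (List.ofFn fun i : Fin n => x i)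

/-- `y = σ(x)` for one-sided sequences, with `σ(x)` infinite. -/
def OneSidedImage (σ : A → List B) (x : ℕ → A) (y : ℕ → B) : Prop :=
  (∀ m : ℕ, ∃ n : ℕ, m ≤ (prefixImg σ x n).length) ∧
  ∀ n : ℕ, ∀ i : ℕ, ∀ h : i < (prefixImg σ x n).length, y i = (prefixImg σ x n).get ⟨i, h⟩

/-- `σ(x_{[-n,m)})` for a two-sided sequence `x`. -/
def segImg (σ : A → List B) (x : ℤ → A) (n m : ℕ) : List B :=
  wordImg σ (List.ofFn fun i : Fin (n + m) => x ((i : ℤ) - (n : ℤ)))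

/-- `|σ(x_{[-n,0)})|`. -/
def negLen (σ : A → List B) (x : ℤ → A) (n : ℕ) : ℕ :=
  (wordImg σ (List.ofFn fun i : Fin n => x ((i : ℤ) - (n : ℤ)))).length

/-- `y = σ(x)` for two-sided sequences, with `σ(x)` two-sided infinite
(the letter `x₀` is sent at position `0`). -/
def TwoSidedImage (σ : A → List B) (x : ℤ → A) (y : ℤ → B) : Prop :=
  (∀ m : ℕ, ∃ n : ℕ, m ≤ (prefixImg σ (plusSeq x) n).length) ∧
  (∀ m : ℕ, ∃ n : ℕ, m ≤ negLen σ x n) ∧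
  ∀ n m : ℕ, ∀ i : ℕ, ∀ h : i < (segImg σ x n m).length,
    y ((i : ℤ) - (negLen σ x n : ℤ)) = (segImg σ x n m).get ⟨i, h⟩

/-- `(x,k)` is a σ-representation of the two-sided sequence `y`, with `x ∈ X`. -/
def IsRepZ (σ : A → List B) (X : Set (ℤ → A)) (y : ℤ → B) (x : ℤ → A) (k : ℕ) : Prop :=
  x ∈ X ∧ k < (σ (x 0)).length ∧ ∃ z, TwoSidedImage σ x z ∧ ∀ n : ℤ, y n = z (n + k)

/-- `σ` is recognizable on `X` at the two-sided point `y`. -/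
def RecognizableAtZ (σ : A → List B) (X : Set (ℤ → A)) (y : ℤ → B) : Prop :=
  ∀ x k x' k', IsRepZ σ X y x k → IsRepZ σ X y x' k' → x = x' ∧ k = k'

/-- `σ` is recognizable on `X`. -/
def RecognizableZ (σ : A → List B) (X : Set (ℤ → A)) : Prop :=
  ∀ y : ℤ → B, RecognizableAtZ σ X y

/-- `(x,k)` is a σ-representation of the one-sided sequence `y`, with `x ∈ X`. -/
def IsRepN (σ : A → List B) (X : Set (ℕ → A)) (y : ℕ → B) (x : ℕ → A) (k : ℕ) : Prop :=
  x ∈ X ∧ k < (σ (x 0)).length ∧ ∃ z, OneSidedImage σ x z ∧ ∀ n : ℕ, y n = z (n + k)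

/-- `σ` is one-sided recognizable on `X` at `y`. -/
def RecognizableAtN (σ : A → List B) (X : Set (ℕ → A)) (y : ℕ → B) : Prop :=
  ∀ x k x' k', IsRepN σ X y x k → IsRepN σ X y x' k' → x = x' ∧ k = k'

/-- `σ` is one-sided recognizable on `X`. -/
def RecognizableN (σ : A → List B) (X : Set (ℕ → A)) : Prop :=
  ∀ y : ℕ → B, RecognizableAtN σ X y

/-- The set `C(x)` of cutting points of a two-sided sequence. -/
def CutSet (σ : A → List B) (x : ℤ → A) : Set ℤ :=
  {m | ∃ n : ℕ, m = ((prefixImg σ (plusSeq x) n).length : ℤ)} ∪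
  {m | ∃ n : ℕ, m = -((negLen σ x n : ℤ))}

/-- The set `C⁺(x)` of cutting points of a one-sided sequence. -/
def CutSetPlus (σ : A → List B) (x : ℕ → A) : Set ℕ :=
  {m | ∃ n : ℕ, m = (prefixImg σ x n).length}

/-- Recognizability in the sense of Mossé with scope `N` (two-sided windows). -/
def MosseRec (σ : A → List B) (x : ℤ → A) (y : ℤ → B) (N : ℕ) : Prop :=
  ∀ i j : ℤ, (∀ d : ℤ, -(N : ℤ) ≤ d → d ≤ N → y (i + d) = y (j + d)) →
    (i ∈ CutSet σ x ↔ j ∈ CutSet σ x)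

/-- One-sided recognizability in the sense of Mossé with scope `N`, for a two-sided point. -/
def MosseRecOne (σ : A → List B) (x : ℤ → A) (y : ℤ → B) (N : ℕ) : Prop :=
  ∀ i j : ℤ, (∀ d : ℕ, d < N → y (i + d) = y (j + d)) →
    (i ∈ CutSet σ x ↔ j ∈ CutSet σ x)

/-- One-sided recognizability in the sense of Mossé with scope `N`, for a one-sided point. -/
def MosseRecOneN (σ : A → List B) (x : ℕ → A) (y : ℕ → B) (N : ℕ) : Prop :=
  ∀ i j : ℕ, (∀ d : ℕ, d < N → y (i + d) = y (j + d)) →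
    (i ∈ CutSetPlus σ x ↔ j ∈ CutSetPlus σ x)

/-- The extension of `σ` to words. -/
def substWord (σ : A → List A) : List A → List A := fun w => wordImg σ w

/-- The `n`-th power of the endomorphism `σ`, as a map on letters. -/
def wordPow (σ : A → List A) (n : ℕ) : A → List A := fun a => (substWord σ)^[n] [a]

/-- `w` belongs to the language `L(σ)` of the endomorphism `σ`. -/
def InLangSigma (σ : A → List A) (w : List A) : Prop :=
  ∃ n : ℕ, ∃ a : A, w <:+: (substWord σ)^[n] [a]

/-- The substitution shift `X(σ)`. -/
def Xsig (σ : A → List A) : Set (ℤ → A) :=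
  {x | ∀ k : ℤ, ∀ n : ℕ, InLangSigma σ (List.ofFn fun i : Fin n => x (k + (i : ℤ)))}

/-- The (two-sided) orbit of a two-sided sequence under the shift. -/
def orbitZ (x : ℤ → A) : Set (ℤ → A) := {y | ∃ n : ℤ, ∀ i, y i = x (i + n)}

/-- The forward orbit of a one-sided sequence under the shift. -/
def orbitN (x : ℕ → A) : Set (ℕ → A) := {y | ∃ n : ℕ, ∀ i, y i = x (i + n)}

/-- A two-sided sequence is periodic. -/
def PeriodicZ (x : ℤ → A) : Prop := ∃ n : ℕ, 1 ≤ n ∧ ∀ i, x (i + n) = x i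

/-- A one-sided sequence is periodic. -/
def PeriodicN (x : ℕ → A) : Prop := ∃ n : ℕ, 1 ≤ n ∧ ∀ i, x (i + n) = x i

/-- Minimality of a two-sided shift space. -/
def MinimalZ [TopologicalSpace A] (X : Set (ℤ → A)) : Prop :=
  X.Nonempty ∧ ∀ x ∈ X, X ⊆ closure (orbitZ x)

/-- Minimality of a one-sided shift space. -/
def MinimalN [TopologicalSpace A] (X : Set (ℕ → A)) : Prop :=
  X.Nonempty ∧ ∀ x ∈ X, X ⊆ closure (orbitN x)

/-- Prepend a letter to a one-sided sequence. -/
def consSeq (a : A) (x : ℕ → A) : ℕ → A := fun i => match i with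
  | 0 => a
  | j + 1 => x j

/-- Prepend a word to a one-sided sequence. -/
def prependSeq (w : List A) (x : ℕ → A) : ℕ → A := fun i =>
  if h : i < w.length then w.get ⟨i, h⟩ else x (i - w.length)

/-- `u` is left-special in the one-sided shift `X`. -/
def LeftSpecial (X : Set (ℕ → A)) (u : ℕ → A) : Prop :=
  2 ≤ Nat.card {a : A // consSeq a u ∈ X}

/-- Two two-sided sequences are asymptotically equivalent. -/
def AsympEq (x y : ℤ → A) : Prop := ∃ n m : ℤ, ∀ i : ℕ, x (n + i) = y (m + i)

/-- `C` is an asymptotic class of `X`. -/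
def IsAsympClass (X : Set (ℤ → A)) (C : Set (ℤ → A)) : Prop :=
  ∃ x ∈ X, C = {y ∈ X | AsympEq x y}

/-- An asymptotic class is non-trivial if it is not reduced to a single orbit. -/
def NontrivialClass (C : Set (ℤ → A)) : Prop :=
  ∃ y ∈ C, ∃ z ∈ C, z ∉ orbitZ y

/-- The closure under the shift of `σ(X)`. -/
def imageShiftClosure [TopologicalSpace B] (σ : A → List B) (X : Set (ℤ → A)) :
    Set (ℤ → B) :=
  closure {y | ∃ x ∈ X, ∃ z, TwoSidedImage σ x z ∧ ∃ m : ℤ, ∀ i, y i = z (i + m)}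

/-- The Fibonacci morphism `a ↦ ab, b ↦ a`, with `a = false`, `b = true`. -/
def fib : Bool → List Bool := fun c => if c then [false] else [false, true]

/-- The reversed Fibonacci morphism `σ̃ : a ↦ ba, b ↦ a`. -/
def tfib : Bool → List Bool := fun c => if c then [false] else [true, false]


/-! ### Auxiliary machinery -/

section Aux

open List

/-- Prefix of a one-sided sequence as a list. -/
def pl (x : ℕ → Bool) (n : ℕ) : List Bool := List.ofFn fun i : Fin n => x i

lemma pl_zero (x : ℕ → Bool) : pl x 0 = [] := rfl

lemma pl_length (x : ℕ → Bool) (n : ℕ) : (pl x n).length = n := by simp [pl]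

lemma pl_get (x : ℕ → Bool) (n i : ℕ) (h : i < (pl x n).length) :
    (pl x n).get ⟨i, h⟩ = x i := by simp [pl]

lemma pl_succ (x : ℕ → Bool) (n : ℕ) : pl x (n + 1) = pl x n ++ [x n] := by
  rw [pl, List.ofFn_succ']
  simp [pl, List.concat_eq_append]

lemma pl_cons (c : Bool) (x : ℕ → Bool) (n : ℕ) :
    pl (consSeq c x) (n + 1) = c :: pl x n := by
  simp only [pl, List.ofFn_succ]
  rfl

lemma prefixImg_eq (σ : Bool → List Bool) (x : ℕ → Bool) (n : ℕ) :
    prefixImg σ x n = wordImg σ (pl x n) := rfl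

lemma wordImg_nil (σ : Bool → List Bool) : wordImg σ [] = [] := rfl

lemma wordImg_cons (σ : Bool → List Bool) (c : Bool) (w : List Bool) :
    wordImg σ (c :: w) = σ c ++ wordImg σ w := by simp [wordImg]

lemma wordImg_append (σ : Bool → List Bool) (u v : List Bool) :
    wordImg σ (u ++ v) = wordImg σ u ++ wordImg σ v := by simp [wordImg]

lemma wordImg_singleton (σ : Bool → List Bool) (c : Bool) :
    wordImg σ [c] = σ c := by simp [wordImg]

lemma substWord_eq (σ : Bool → List Bool) (w : List Bool) :
    substWord σ w = wordImg σ w := rfl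

lemma substWord_iter_nil (σ : Bool → List Bool) (n : ℕ) :
    (substWord σ)^[n] [] = [] := by
  induction n with
  | zero => rfl
  | succ n ih => rw [Function.iterate_succ_apply, substWord_eq, wordImg_nil, ih]

lemma substWord_iter_append (σ : Bool → List Bool) (n : ℕ) (u v : List Bool) :
    (substWord σ)^[n] (u ++ v) = (substWord σ)^[n] u ++ (substWord σ)^[n] v := by
  induction n generalizing u v with
  | zero => rfl
  | succ n ih =>
      rw [Function.iterate_succ_apply, Function.iterate_succ_apply,
        Function.iterate_succ_apply, substWord_eq, wordImg_append, ih]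
      rfl

lemma wordImg_wordPow (σ : Bool → List Bool) (n : ℕ) (w : List Bool) :
    wordImg (wordPow σ n) w = (substWord σ)^[n] w := by
  induction w with
  | nil => rw [wordImg_nil, substWord_iter_nil]
  | cons c w ih =>
      rw [wordImg_cons, ih]
      have : (c :: w) = [c] ++ w := rfl
      rw [this, substWord_iter_append]
      rfl

lemma wordImg_infix (σ : Bool → List Bool) {u v : List Bool} (h : u <:+: v) :
    wordImg σ u <:+: wordImg σ v := by
  obtain ⟨s, e, rfl⟩ := h
  exact ⟨wordImg σ s, wordImg σ e, by rw [wordImg_append, wordImg_append]⟩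

lemma prefixImg_succ (σ : Bool → List Bool) (x : ℕ → Bool) (n : ℕ) :
    prefixImg σ x (n + 1) = prefixImg σ x n ++ σ (x n) := by
  rw [prefixImg_eq, prefixImg_eq, pl_succ, wordImg_append, wordImg_singleton]

lemma prefixImg_mono (σ : Bool → List Bool) (x : ℕ → Bool) {m n : ℕ} (h : m ≤ n) :
    prefixImg σ x m <+: prefixImg σ x n := by
  induction n with
  | zero => simp_all
  | succ n ih =>
      rcases Nat.lt_or_ge m (n+1) with h' | h'
      · exact (ih (Nat.lt_succ_iff.mp h')).trans
          ⟨σ (x n), (prefixImg_succ σ x n).symm⟩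
      · have : m = n + 1 := le_antisymm h h'
        subst this; exact List.prefix_refl _

lemma prefixImg_len_ge (σ : Bool → List Bool) (hσ : ∀ c, 1 ≤ (σ c).length)
    (x : ℕ → Bool) (n : ℕ) : n ≤ (prefixImg σ x n).length := by
  induction n with
  | zero => simp
  | succ n ih =>
      rw [prefixImg_succ, List.length_append]
      have := hσ (x n)
      omega

/-- Canonical infinite image sequence. -/
def zfun (σ : Bool → List Bool) (x : ℕ → Bool) : ℕ → Bool :=
  fun j => (prefixImg σ x (j + 1)).getD j false

lemma zfun_spec (σ : Bool → List Bool) (hσ : ∀ c, 1 ≤ (σ c).length) (x : ℕ → Bool)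
    (n i : ℕ) (h : i < (prefixImg σ x n).length) :
    zfun σ x i = (prefixImg σ x n).get ⟨i, h⟩ := by
  have hi : i < (prefixImg σ x (i + 1)).length :=
    lt_of_lt_of_le (Nat.lt_succ_self i) (prefixImg_len_ge σ hσ x (i + 1))
  rw [zfun, List.getD_eq_getElem _ _ hi, List.get_eq_getElem]
  rcases Nat.le_total n (i + 1) with hle | hle
  · exact ((prefixImg_mono σ x hle).getElem h).symm
  · exact (prefixImg_mono σ x hle).getElem hi

lemma zfun_osi (σ : Bool → List Bool) (hσ : ∀ c, 1 ≤ (σ c).length) (x : ℕ → Bool) :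
    OneSidedImage σ x (zfun σ x) :=
  ⟨fun m => ⟨m, prefixImg_len_ge σ hσ x m⟩, fun n i h => zfun_spec σ hσ x n i h⟩

/-- Build a `OneSidedImage` from explicit prefix computations. -/
lemma osi_of_prefixes (σ : Bool → List Bool) (x y : ℕ → Bool)
    (h1 : ∀ m : ℕ, ∃ n : ℕ, m ≤ (prefixImg σ x n).length)
    (h2 : ∀ n : ℕ, ∃ m : ℕ, prefixImg σ x n = pl y m) :
    OneSidedImage σ x y := by
  refine ⟨h1, fun n i h => ?_⟩
  obtain ⟨m, hm⟩ := h2 n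
  rw [List.get_eq_getElem]
  have h' : i < (pl y m).length := by rw [← hm]; exact h
  calc y i = (pl y m).get ⟨i, h'⟩ := (pl_get y m i h').symm
    _ = (prefixImg σ x n).get ⟨i, h⟩ := by
        simp only [List.get_eq_getElem]
        congr 1
        exact hm.symm

end Aux


section Aux2

lemma fib_len : ∀ c, 1 ≤ (fib c).length := by decide

lemma tfib_len : ∀ c, 1 ≤ (tfib c).length := by decide

lemma fib_conj : ∀ w : List Bool,
    false :: wordImg tfib w = wordImg fib w ++ [false] := by
  intro w
  induction w with
  | nil => rfl
  | cons c w ih =>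
      rw [wordImg_cons, wordImg_cons]
      cases c
      · show false :: ([true, false] ++ wordImg tfib w) = [false, true] ++ _ ++ _
        simp only [List.cons_append, List.nil_append, List.append_assoc, ← ih]
      · show false :: ([false] ++ wordImg tfib w) = [false] ++ _ ++ _
        simp only [List.cons_append, List.nil_append, List.append_assoc, ← ih]

variable (t : ℕ → Bool)

/-- `|σ(t₀⋯t_{k-1})|`. -/
def Lf (k : ℕ) : ℕ := (prefixImg fib t k).length

variable (ht : OneSidedImage fib t t) (ht0 : t 0 = false)

include ht

lemma pref_eq (k : ℕ) : prefixImg fib t k = pl t (Lf t k) := by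
  apply List.ext_getElem (by rw [pl_length]; rfl)
  intro i h1 h2
  have := ht.2 k i h1
  rw [List.get_eq_getElem] at this
  simp only [pl, List.getElem_ofFn]
  exact this.symm

lemma Lf_ge (k : ℕ) : k ≤ Lf t k := prefixImg_len_ge fib fib_len t k

lemma Lf_lt (k : ℕ) : Lf t k < Lf t (k + 1) := by
  show _ < (prefixImg fib t (k+1)).length
  rw [prefixImg_succ, List.length_append]
  have := fib_len (t k)
  show Lf t k < Lf t k + _
  omega

lemma t_at_Lf (k : ℕ) : t (Lf t k) = false := by
  have h : Lf t k < (prefixImg fib t (k + 1)).length := Lf_lt t ht k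
  have h2 := ht.2 (k + 1) (Lf t k) h
  rw [List.get_eq_getElem] at h2
  rw [h2, List.getElem_of_eq (prefixImg_succ fib t k)]
  simp only [Fin.val_mk]
  simp only [Lf]
  rw [List.getElem_append_right (le_refl (prefixImg fib t k).length)]
  simp only [Nat.sub_self]
  rcases Bool.dichotomy (t k) with hc | hc <;> simp [hc, fib]

lemma key_img (k : ℕ) :
    false :: wordImg tfib (pl t k) = pl t (Lf t k + 1) := by
  rw [fib_conj, ← prefixImg_eq, pref_eq t ht, pl_succ, t_at_Lf t ht]

lemma img_bt (k : ℕ) :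
    wordImg tfib (pl (consSeq true t) (k + 1)) = pl t (Lf t k + 1) := by
  rw [pl_cons, wordImg_cons]
  show [false] ++ _ = _
  rw [List.singleton_append, key_img t ht]

lemma img_at (k : ℕ) :
    wordImg tfib (pl (consSeq false t) (k + 1)) = pl (consSeq true t) (Lf t k + 2) := by
  rw [pl_cons, wordImg_cons]
  show [true, false] ++ _ = _
  have : pl (consSeq true t) (Lf t k + 2) = true :: pl t (Lf t k + 1) := pl_cons _ _ _
  rw [this, ← key_img t ht]
  rfl

lemma img_eta (k : ℕ) :
    wordImg tfib (pl (consSeq false (consSeq true t)) (k + 2)) =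
      pl (consSeq true (consSeq false t)) (Lf t k + 3) := by
  rw [pl_cons, wordImg_cons]
  show [true, false] ++ _ = _
  rw [img_bt t ht]
  have h1 : pl (consSeq true (consSeq false t)) (Lf t k + 3) =
      true :: pl (consSeq false t) (Lf t k + 2) := pl_cons _ _ _
  have h2 : pl (consSeq false t) (Lf t k + 2) = false :: pl t (Lf t k + 1) := pl_cons _ _ _
  rw [h1, h2]
  rfl

lemma img_theta (k : ℕ) :
    wordImg tfib (pl (consSeq true (consSeq false t)) (k + 2)) =
      pl (consSeq false (consSeq true t)) (Lf t k + 3) := by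
  have h0 : pl (consSeq true (consSeq false t)) (k + 2) =
      true :: pl (consSeq false t) (k + 1) := pl_cons _ _ _
  rw [h0, wordImg_cons]
  show [false] ++ _ = _
  rw [img_at t ht, List.singleton_append, ← pl_cons]

lemma osi_bt : OneSidedImage tfib (consSeq true t) t := by
  apply osi_of_prefixes
  · exact fun m => ⟨m, prefixImg_len_ge tfib tfib_len _ m⟩
  · intro n
    match n with
    | 0 => exact ⟨0, rfl⟩
    | k + 1 => exact ⟨Lf t k + 1, img_bt t ht k⟩

lemma osi_at : OneSidedImage tfib (consSeq false t) (consSeq true t) := by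
  apply osi_of_prefixes
  · exact fun m => ⟨m, prefixImg_len_ge tfib tfib_len _ m⟩
  · intro n
    match n with
    | 0 => exact ⟨0, rfl⟩
    | k + 1 => exact ⟨Lf t k + 2, img_at t ht k⟩

end Aux2





section Aux3

lemma wordPow_succ (σ : Bool → List Bool) (n : ℕ) (c : Bool) :
    wordPow σ (n + 1) c = (substWord σ)^[n] (σ c) := by
  show (substWord σ)^[n + 1] [c] = _
  rw [Function.iterate_succ_apply]
  congr 1
  show wordImg σ [c] = σ c
  exact wordImg_singleton σ c

lemma pow_b_succ (m : ℕ) : wordPow tfib (m + 1) true = wordPow tfib m false := by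
  rw [wordPow_succ]
  rfl

lemma pow_a_split (m : ℕ) :
    wordPow tfib (m + 1) false = wordPow tfib m true ++ wordPow tfib (m + 1) true := by
  rw [wordPow_succ, pow_b_succ]
  show (substWord tfib)^[m] ([true] ++ [false]) = _
  rw [substWord_iter_append]
  rfl

lemma wordImg_len_ge (σ : Bool → List Bool) (hσ : ∀ c, 1 ≤ (σ c).length)
    (w : List Bool) : w.length ≤ (wordImg σ w).length := by
  induction w with
  | nil => simp [wordImg_nil]
  | cons c w ih =>
      rw [wordImg_cons, List.length_append, List.length_cons]
      have := hσ c
      omega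

lemma pow_len (n : ℕ) : ∀ c, 1 ≤ (wordPow tfib n c).length := by
  induction n with
  | zero => intro c; rfl
  | succ n ih =>
      intro c
      show 1 ≤ ((substWord tfib)^[n + 1] [c]).length
      rw [Function.iterate_succ_apply']
      calc 1 ≤ ((substWord tfib)^[n] [c]).length := ih c
        _ ≤ _ := wordImg_len_ge tfib tfib_len _

lemma rep_split (t : ℕ → Bool) (n m : ℕ) :
    prefixImg (wordPow tfib (n + 1)) (consSeq false t) (m + 1) =
      wordPow tfib n true ++ prefixImg (wordPow tfib (n + 1)) (consSeq true t) (m + 1) := by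
  rw [prefixImg_eq, prefixImg_eq, pl_cons, pl_cons, wordImg_cons, wordImg_cons,
    pow_a_split, List.append_assoc]




/-- `σ̃ⁿ(a)`. -/
def tw (m : ℕ) : List Bool := (substWord tfib)^[m] [false]

lemma tw_eq_pow (m : ℕ) : tw m = wordPow tfib m false := rfl

lemma tw_succ (m : ℕ) : tw (m + 1) = substWord tfib (tw m) := by
  rw [tw, Function.iterate_succ_apply']
  rfl

lemma tw_two (m : ℕ) :
    tw (m + 2) = tw m ++ (substWord tfib)^[m] [true] ++ tw m := by
  have h1 : tw (m + 2) = (substWord tfib)^[m] ((substWord tfib)^[2] [false]) := by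
    rw [tw, ← Function.iterate_add_apply]
  have h2 : (substWord tfib)^[2] [false] = [false] ++ [true] ++ [false] := rfl
  rw [h1, h2, substWord_iter_append, substWord_iter_append]
  rfl

lemma tw_prefix (m : ℕ) : tw m <+: tw (m + 2) :=
  ⟨(substWord tfib)^[m] [true] ++ tw m, by rw [tw_two, List.append_assoc]⟩

lemma tw_suffix (m : ℕ) : tw m <:+ tw (m + 2) :=
  ⟨tw m ++ (substWord tfib)^[m] [true], by rw [tw_two]⟩

lemma tw_len_pos (m : ℕ) : 1 ≤ (tw m).length := pow_len m false

lemma tw_len_step (m : ℕ) : (tw m).length + 1 ≤ (tw (m + 2)).length := by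
  rw [tw_two, List.length_append, List.length_append]
  have h : 1 ≤ ((substWord tfib)^[m] [true]).length := pow_len m true
  have h2 := tw_len_pos m
  omega

lemma tw_len_lb : ∀ k p : ℕ, k + 1 ≤ (tw (2 * k + p)).length := by
  intro k
  induction k with
  | zero => intro p; simpa using tw_len_pos p
  | succ k ih =>
      intro p
      have h1 : 2 * (k + 1) + p = (2 * k + p) + 2 := by ring
      rw [h1]
      have := tw_len_step (2 * k + p)
      have := ih p
      omega

lemma iter_infix (m : ℕ) {u v : List Bool} (h : u <:+: v) :
    (substWord tfib)^[m] u <:+: (substWord tfib)^[m] v := by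
  obtain ⟨s, e, rfl⟩ := h
  exact ⟨(substWord tfib)^[m] s, (substWord tfib)^[m] e, by
    rw [← substWord_iter_append, ← substWord_iter_append]⟩

lemma inlang_infix {u v : List Bool} (hv : InLangSigma tfib v) (h : u <:+: v) :
    InLangSigma tfib u := by
  obtain ⟨n, c, hn⟩ := hv
  exact ⟨n, c, h.trans hn⟩

lemma tw_three : tw 3 = [true, false, false, true, false] := rfl

lemma inlang_twtw (m : ℕ) : InLangSigma tfib (tw m ++ tw m) := by
  refine ⟨m + 3, false, ?_⟩
  have h1 : tw m ++ tw m = (substWord tfib)^[m] ([false] ++ [false]) := by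
    rw [substWord_iter_append]; rfl
  have h2 : ([false] ++ [false] : List Bool) <:+: tw 3 := by
    rw [tw_three]; decide
  have h3 := iter_infix m h2
  rw [← h1] at h3
  have h4 : (substWord tfib)^[m] (tw 3) = (substWord tfib)^[m + 3] [false] := by
    rw [tw, ← Function.iterate_add_apply]
  rw [h4] at h3
  exact h3

lemma suffix_getD {l₁ l₂ : List Bool} (h : l₁ <:+ l₂) (j : ℕ) (hj : j < l₁.length) :
    l₂.getD (l₂.length - 1 - j) false = l₁.getD (l₁.length - 1 - j) false := by
  obtain ⟨s, rfl⟩ := h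
  have hlen : (s ++ l₁).length = s.length + l₁.length := List.length_append
  have h1 : (s ++ l₁).length - 1 - j < (s ++ l₁).length := by omega
  have h2 : l₁.length - 1 - j < l₁.length := by omega
  rw [List.getD_eq_getElem _ _ h1, List.getD_eq_getElem _ _ h2,
    List.getElem_append_right (by omega : s.length ≤ (s ++ l₁).length - 1 - j)]
  congr 1
  omega

lemma ofFn_getD_eq (l : List Bool) (o nn : ℕ) (h : o + nn ≤ l.length) :
    List.ofFn (fun i : Fin nn => l.getD (o + i) false) = (l.drop o).take nn := by
  apply List.ext_getElem (by simp; omega)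
  intro i h1 h2
  simp only [List.getElem_ofFn]
  rw [List.getElem_take, List.getElem_drop, List.getD_eq_getElem _ _ (by simp at h1; omega)]

/-- The standard two-sided point built from a coherent chain of words. -/
def xi (u : ℕ → Bool) (V : ℕ → List Bool) : ℤ → Bool := fun i =>
  if -1 ≤ i then u (i + 1).toNat
  else (V (-i - 2).toNat).getD ((V (-i - 2).toNat).length - 1 - (-i - 2).toNat) false

lemma mem_general (u : ℕ → Bool) (V : ℕ → List Bool)
    (hpre : ∀ n, V n <+: V (n + 1))
    (hsuf : ∀ n, V n <:+ V (n + 1))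
    (hlen : ∀ n, n + 1 ≤ (V n).length)
    (hval : ∀ n j, (hj : j < (V n).length) → (V n).getD j false = u j)
    (hlang : ∀ n, InLangSigma tfib (V n ++ V n)) :
    xi u V ∈ Xsig tfib := by
  have hpre' : ∀ a b, a ≤ b → V a <+: V b := by
    intro a b hab
    induction b, hab using Nat.le_induction with
    | base => exact List.prefix_refl _
    | succ b hab ih => exact ih.trans (hpre b)
  have hsuf' : ∀ a b, a ≤ b → V a <:+ V b := by
    intro a b hab
    induction b, hab using Nat.le_induction with
    | base => exact List.suffix_refl _
    | succ b hab ih => exact ih.trans (hsuf b)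
  -- coherence of the left part
  have hcoh : ∀ (i : ℤ), i ≤ -2 → ∀ N : ℕ, (-i - 2).toNat < (V N).length →
      xi u V i = (V N).getD ((V N).length - 1 - (-i - 2).toNat) false := by
    intro i hi N hN
    have hneg : ¬ (-1 ≤ i) := by omega
    rw [xi, if_neg hneg]
    set j := (-i - 2).toNat with hjdef
    have hjV : j < (V j).length := hlen j
    rcases le_total j N with hle | hle
    · exact (suffix_getD (hsuf' j N hle) j hjV).symm
    · exact suffix_getD (hsuf' N j hle) j hN
  -- window identification
  have hwin : ∀ (N : ℕ) (i : ℤ), -1 - ((V N).length : ℤ) ≤ i →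
      i + 1 < ((V N).length : ℤ) →
      xi u V i = (V N ++ V N).getD (i + 1 + (V N).length).toNat false := by
    intro N i h1 h2
    have hL1 : 1 ≤ (V N).length := by have := hlen N; omega
    rcases le_or_gt (-1) i with hge | hlt
    · -- right part
      have hjeq : ((i + 1).toNat : ℤ) = i + 1 := by omega
      have hjL : (i + 1).toNat < (V N).length := by omega
      have hidx : (i + 1 + (V N).length).toNat = (i + 1).toNat + (V N).length := by
        omega
      rw [xi, if_pos hge, hidx]
      have hb2 : (i + 1).toNat + (V N).length < (V N ++ V N).length := by
        rw [List.length_append]; omega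
      rw [List.getD_eq_getElem _ _ hb2,
        List.getElem_append_right (Nat.le_add_left _ _)]
      have hb3 : (i + 1).toNat + (V N).length - (V N).length = (i + 1).toNat := by
        omega
      have hval' := hval N (i + 1).toNat hjL
      rw [List.getD_eq_getElem _ _ hjL] at hval'
      rw [← hval']
      congr 1
      omega
    · -- left part
      have hi2 : i ≤ -2 := by omega
      have hjeq : ((-i - 2).toNat : ℤ) = -i - 2 := by omega
      have hjL : (-i - 2).toNat < (V N).length := by omega
      have hidx : (i + 1 + (V N).length).toNat =
          (V N).length - 1 - (-i - 2).toNat := by omega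
      rw [hcoh i hi2 N hjL, hidx]
      have hb1 : (V N).length - 1 - (-i - 2).toNat < (V N).length := by omega
      have hb2 : (V N).length - 1 - (-i - 2).toNat < (V N ++ V N).length := by
        rw [List.length_append]; omega
      rw [List.getD_eq_getElem _ _ hb1, List.getD_eq_getElem _ _ hb2,
        List.getElem_append_left]
  -- conclusion
  intro k nn
  have hLn : (nn + k.natAbs + 2) + 1 ≤ (V (nn + k.natAbs + 2)).length :=
    hlen (nn + k.natAbs + 2)
  set N := nn + k.natAbs + 2 with hN
  have ho : (0 : ℤ) ≤ k + 1 + (V N).length := by omega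
  have hword : ∀ i : Fin nn,
      xi u V (k + i) = (V N ++ V N).getD ((k + 1 + ((V N).length : ℤ)).toNat + i) false := by
    intro i
    have hilt : (i : ℕ) < nn := i.isLt
    have h1 : -1 - ((V N).length : ℤ) ≤ k + i := by omega
    have h2 : (k + i) + 1 < ((V N).length : ℤ) := by omega
    have h3 : ((k + i) + 1 + (V N).length).toNat =
        (k + 1 + ((V N).length : ℤ)).toNat + i := by omega
    rw [hwin N (k + i) h1 h2, h3]
  have hofn : (List.ofFn fun i : Fin nn => xi u V (k + i)) =
      List.ofFn (fun i : Fin nn =>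
        (V N ++ V N).getD ((k + 1 + ((V N).length : ℤ)).toNat + i) false) :=
    congrArg _ (funext hword)
  rw [hofn, ofFn_getD_eq _ _ _ (by rw [List.length_append]; omega)]
  exact inlang_infix (hlang N)
    ((List.take_prefix _ _).isInfix.trans (List.drop_suffix _ _).isInfix)



variable (t : ℕ → Bool) (ht : OneSidedImage fib t t) (ht0 : t 0 = false)

include ht

lemma pl_getD (u : ℕ → Bool) (k j : ℕ) (hj : j < k) :
    (pl u k).getD j false = u j := by
  rw [List.getD_eq_getElem _ _ (by rw [pl_length]; exact hj)]
  simp only [pl, List.getElem_ofFn]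

lemma step_eta (k : ℕ) : ∃ j, wordImg tfib (pl (consSeq false (consSeq true t)) k) =
    pl (consSeq true (consSeq false t)) j := by
  match k with
  | 0 => exact ⟨0, rfl⟩
  | 1 =>
      refine ⟨2, ?_⟩
      have h1 : pl (consSeq false (consSeq true t)) 1 = [false] := rfl
      have h2 : pl (consSeq true (consSeq false t)) 2 = [true, false] := rfl
      rw [h1, h2]
      rfl
  | (k + 2) => exact ⟨Lf t k + 3, img_eta t ht k⟩

lemma step_theta (k : ℕ) : ∃ j, wordImg tfib (pl (consSeq true (consSeq false t)) k) =
    pl (consSeq false (consSeq true t)) j := by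
  match k with
  | 0 => exact ⟨0, rfl⟩
  | 1 =>
      refine ⟨1, ?_⟩
      have h1 : pl (consSeq true (consSeq false t)) 1 = [true] := rfl
      have h2 : pl (consSeq false (consSeq true t)) 1 = [false] := rfl
      rw [h1, h2]
      rfl
  | (k + 2) => exact ⟨Lf t k + 3, img_theta t ht k⟩

lemma tw_form : ∀ m : ℕ,
    (m % 2 = 0 → tw m = pl (consSeq false (consSeq true t)) ((tw m).length)) ∧
    (m % 2 = 1 → tw m = pl (consSeq true (consSeq false t)) ((tw m).length)) := by
  intro m
  induction m with
  | zero =>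
      constructor
      · intro _
        rfl
      · intro h
        exact absurd h (by decide)
  | succ m ih =>
      rcases Nat.mod_two_eq_zero_or_one m with hm | hm
      · refine ⟨fun h => absurd h (by omega), fun _ => ?_⟩
        have hm' := ih.1 hm
        have h1 : tw (m + 1) = wordImg tfib (pl (consSeq false (consSeq true t))
            ((tw m).length)) := by
          conv_lhs => rw [tw_succ, hm']
          rfl
        obtain ⟨j, hj⟩ := step_eta t ht ((tw m).length)
        rw [hj] at h1
        have hlen : (tw (m + 1)).length = j := by rw [h1, pl_length]
        rw [hlen]
        exact h1
      · refine ⟨fun _ => ?_, fun h => absurd h (by omega)⟩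
        have hm' := ih.2 hm
        have h1 : tw (m + 1) = wordImg tfib (pl (consSeq true (consSeq false t))
            ((tw m).length)) := by
          conv_lhs => rw [tw_succ, hm']
          rfl
        obtain ⟨j, hj⟩ := step_theta t ht ((tw m).length)
        rw [hj] at h1
        have hlen : (tw (m + 1)).length = j := by rw [h1, pl_length]
        rw [hlen]
        exact h1

lemma mem_bt : consSeq true t ∈ SetPlus (Xsig tfib) := by
  refine ⟨xi (consSeq false (consSeq true t)) (fun n => tw (2 * n)), ?_, ?_⟩
  · apply mem_general
    · intro n
      have h := tw_prefix (2 * n)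
      have he : 2 * (n + 1) = 2 * n + 2 := by ring
      rw [he]
      exact h
    · intro n
      have h := tw_suffix (2 * n)
      have he : 2 * (n + 1) = 2 * n + 2 := by ring
      rw [he]
      exact h
    · intro n
      simpa using tw_len_lb n 0
    · intro n j hj
      have hform := (tw_form t ht (2 * n)).1 (by omega)
      calc (tw (2 * n)).getD j false
          = (pl (consSeq false (consSeq true t)) ((tw (2 * n)).length)).getD j false := by
            rw [← hform]
        _ = _ := pl_getD t ht _ _ j hj
    · intro n
      exact inlang_twtw (2 * n)
  · funext nn
    show xi _ _ (nn : ℤ) = consSeq true t nn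
    rw [xi, if_pos (by omega : (-1 : ℤ) ≤ (nn : ℤ))]
    have h : ((nn : ℤ) + 1).toNat = nn + 1 := by omega
    rw [h]
    rfl

lemma mem_at : consSeq false t ∈ SetPlus (Xsig tfib) := by
  refine ⟨xi (consSeq true (consSeq false t)) (fun n => tw (2 * n + 1)), ?_, ?_⟩
  · apply mem_general
    · intro n
      have h := tw_prefix (2 * n + 1)
      have he : 2 * (n + 1) + 1 = 2 * n + 1 + 2 := by ring
      rw [he]
      exact h
    · intro n
      have h := tw_suffix (2 * n + 1)
      have he : 2 * (n + 1) + 1 = 2 * n + 1 + 2 := by ring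
      rw [he]
      exact h
    · intro n
      exact tw_len_lb n 1
    · intro n j hj
      have hform := (tw_form t ht (2 * n + 1)).2 (by omega)
      calc (tw (2 * n + 1)).getD j false
          = (pl (consSeq true (consSeq false t)) ((tw (2 * n + 1)).length)).getD j false := by
            rw [← hform]
        _ = _ := pl_getD t ht _ _ j hj
    · intro n
      exact inlang_twtw (2 * n + 1)
  · funext nn
    show xi _ _ (nn : ℤ) = consSeq false t nn
    rw [xi, if_pos (by omega : (-1 : ℤ) ≤ (nn : ℤ))]
    have h : ((nn : ℤ) + 1).toNat = nn + 1 := by omega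
    rw [h]
    rfl

end Aux3

/-- with `t` the fixed point of the Fibonacci morphism, one has
`t = σ̃(bt) = S σ̃(at)`, and for every `n ≥ 1` and `0 ≤ i < F_{n+1}` the point
`S^i σ̃ⁿ(bt)` has the two distinct `σ̃ⁿ`-representations `(bt, i)` and
`(at, F_n + i)`; hence the number of failure points of one-sided
recognizability can be arbitrarily large. -/
theorem stmt16 (t : ℕ → Bool) (ht : OneSidedImage fib t t) (ht0 : t 0 = false) :
    OneSidedImage tfib (consSeq true t) t ∧
    (∃ z, OneSidedImage tfib (consSeq false t) z ∧ ∀ j, t j = z (j + 1)) ∧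
    ∀ n : ℕ, 1 ≤ n → ∀ i : ℕ, i < (wordPow tfib n true).length →
      ∃ y : ℕ → Bool,
        (∃ z, OneSidedImage (wordPow tfib n) (consSeq true t) z ∧
          ∀ j, y j = z (j + i)) ∧
        IsRepN (wordPow tfib n) (SetPlus (Xsig tfib)) y (consSeq true t) i ∧
        IsRepN (wordPow tfib n) (SetPlus (Xsig tfib)) y (consSeq false t)
          ((wordPow tfib (n - 1) true).length + i) ∧
        consSeq true t ≠ consSeq false t := by
  refine ⟨osi_bt t ht, ⟨consSeq true t, osi_at t ht, fun j => rfl⟩, ?_⟩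
  intro n hn i hi
  match n, hn with
  | (m + 1), _ =>
    have hF : m + 1 - 1 = m := rfl
    rw [hF]
    have hτlen : ∀ c, 1 ≤ (wordPow tfib (m + 1) c).length := pow_len (m + 1)
    have hosi : OneSidedImage (wordPow tfib (m + 1)) (consSeq true t)
        (zfun (wordPow tfib (m + 1)) (consSeq true t)) := zfun_osi _ hτlen _
    have hosi' : OneSidedImage (wordPow tfib (m + 1)) (consSeq false t)
        (zfun (wordPow tfib (m + 1)) (consSeq false t)) := zfun_osi _ hτlen _
    have hrel : ∀ k : ℕ, zfun (wordPow tfib (m + 1)) (consSeq false t)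
        ((wordPow tfib m true).length + k) =
        zfun (wordPow tfib (m + 1)) (consSeq true t) k := by
      intro k
      have hlen : k < (prefixImg (wordPow tfib (m + 1)) (consSeq true t) (k + 1)).length :=
        lt_of_lt_of_le (Nat.lt_succ_self k) (prefixImg_len_ge _ hτlen _ (k + 1))
      have hlen' : (wordPow tfib m true).length + k <
          (prefixImg (wordPow tfib (m + 1)) (consSeq false t) (k + 1)).length := by
        rw [rep_split t m k, List.length_append]
        omega
      rw [zfun_spec _ hτlen _ (k + 1) _ hlen',
        zfun_spec _ hτlen _ (k + 1) _ hlen]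
      simp only [List.get_eq_getElem]
      rw [List.getElem_of_eq (rep_split t m k),
        List.getElem_append_right (Nat.le_add_right _ _)]
      congr 1
      omega
    refine ⟨fun j => zfun (wordPow tfib (m + 1)) (consSeq true t) (j + i),
      ⟨_, hosi, fun j => rfl⟩, ?_, ?_, ?_⟩
    · exact ⟨mem_bt t ht, hi, _, hosi, fun j => rfl⟩
    · refine ⟨mem_at t ht, ?_, _, hosi', ?_⟩
      · show (wordPow tfib m true).length + i < (wordPow tfib (m + 1) false).length
        rw [pow_a_split, List.length_append]
        omega
      · intro j
        show zfun (wordPow tfib (m + 1)) (consSeq true t) (j + i) =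
          zfun (wordPow tfib (m + 1)) (consSeq false t)
            (j + ((wordPow tfib m true).length + i))
        have heq : j + ((wordPow tfib m true).length + i) =
            (wordPow tfib m true).length + (j + i) := by omega
        rw [heq, hrel]
    · intro h
      have h0 := congrFun h 0
      simp only [consSeq] at h0
      exact Bool.noConfusion h0
end
end

section
/- Let X be a recurrent shift space on a finite alphabet. Then the continuous spectrum of (X, S) equals the continuous spectrum of the one-sided shift (X⁺, S): λ is a continuous eigenvalue of X if and only if it is a continuous eigenvalue of X⁺. -/
open scoped Classical

noncomputable section

variable {A B : Type*}

/-- `lam` is a continuous eigenvalue of the two-sided shift space `X`. -/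
def ContEigZ [TopologicalSpace A] (X : Set (ℤ → A)) (lam : ℂ) : Prop :=
  ∃ f : (ℤ → A) → ℂ, ContinuousOn f X ∧ (∃ x ∈ X, f x ≠ 0) ∧
    ∀ x ∈ X, f (shiftZ x) = lam * f x

/-- `lam` is a continuous eigenvalue of the one-sided shift space `X`. -/
def ContEigN [TopologicalSpace A] (X : Set (ℕ → A)) (lam : ℂ) : Prop :=
  ∃ f : (ℕ → A) → ℂ, ContinuousOn f X ∧ (∃ x ∈ X, f x ≠ 0) ∧
    ∀ x ∈ X, f (shiftN x) = lam * f x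

section Aux18

variable {A : Type*} [Fintype A] [TopologicalSpace A] [DiscreteTopology A]

lemma plusSeq_shiftZ (x : ℤ → A) : plusSeq (shiftZ x) = shiftN (plusSeq x) := by
  funext n
  show x ((n : ℤ) + 1) = x (((n + 1 : ℕ) : ℤ))
  congr 1

lemma continuous_plusSeq : Continuous (plusSeq : (ℤ → A) → (ℕ → A)) :=
  continuous_pi fun n => continuous_apply _

lemma shiftZ_iterate (x : ℤ → A) (n : ℕ) (i : ℤ) : (shiftZ^[n] x) i = x (i + n) := by
  induction n generalizing x i with
  | zero => simp
  | succ m ih =>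
    rw [Function.iterate_succ_apply, ih]
    show x (i + m + 1) = _
    congr 1
    omega

lemma shiftZ_mem {X : Set (ℤ → A)} (hX : IsShiftZ X) {x : ℤ → A} (hx : x ∈ X) :
    shiftZ x ∈ X := hX.2 ▸ Set.mem_image_of_mem shiftZ hx

lemma shiftZ_iterate_mem {X : Set (ℤ → A)} (hX : IsShiftZ X) {x : ℤ → A} (hx : x ∈ X)
    (n : ℕ) : shiftZ^[n] x ∈ X := by
  induction n with
  | zero => simpa using hx
  | succ m ih => rw [Function.iterate_succ_apply']; exact shiftZ_mem hX ih

lemma shiftZ_iterate_surj {X : Set (ℤ → A)} (hX : IsShiftZ X) (n : ℕ) {y : ℤ → A}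
    (hy : y ∈ X) : ∃ x ∈ X, shiftZ^[n] x = y := by
  induction n with
  | zero => exact ⟨y, hy, rfl⟩
  | succ m ih =>
    obtain ⟨x, hx, hxy⟩ := ih
    have : x ∈ shiftZ '' X := hX.2.symm ▸ hx
    obtain ⟨x', hx', hxx'⟩ := this
    exact ⟨x', hx', by rw [Function.iterate_succ_apply, hxx', hxy]⟩

lemma eig_iterate {X : Set (ℤ → A)} (hX : IsShiftZ X) {f : (ℤ → A) → ℂ} {lam : ℂ}
    (heig : ∀ x ∈ X, f (shiftZ x) = lam * f x) (n : ℕ) {x : ℤ → A} (hx : x ∈ X) :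
    f (shiftZ^[n] x) = lam ^ n * f x := by
  induction n with
  | zero => simp
  | succ m ih =>
    rw [Function.iterate_succ_apply', heig _ (shiftZ_iterate_mem hX hx m), ih]
    ring

/-- If a continuous eigenfunction on `X` is nonzero somewhere, then `‖lam‖ ≥ 1`. -/
lemma one_le_norm_lam {X : Set (ℤ → A)} (hX : IsShiftZ X) {f : (ℤ → A) → ℂ} {lam : ℂ}
    (hfc : ContinuousOn f X) (hnz : ∃ x ∈ X, f x ≠ 0)
    (heig : ∀ x ∈ X, f (shiftZ x) = lam * f x) : 1 ≤ ‖lam‖ := by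
  by_contra hlt
  push_neg at hlt
  obtain ⟨x₀, hx₀, hfx₀⟩ := hnz
  have hcomp : IsCompact X := hX.1.isCompact
  obtain ⟨M, hM⟩ := hcomp.exists_bound_of_continuousOn hfc
  have key : ∀ N : ℕ, ‖f x₀‖ ≤ ‖lam‖ ^ N * M := by
    intro N
    obtain ⟨y, hy, hyx⟩ := shiftZ_iterate_surj hX N hx₀
    have := eig_iterate hX heig N hy
    rw [hyx] at this
    rw [this]
    rw [norm_mul, norm_pow]
    exact mul_le_mul_of_nonneg_left (hM y hy) (by positivity)
  have htend : Filter.Tendsto (fun N : ℕ => ‖lam‖ ^ N * M) Filter.atTop (nhds 0) := by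
    have := tendsto_pow_atTop_nhds_zero_of_norm_lt_one
      (x := ‖lam‖) (by simpa using hlt)
    simpa using this.mul_const M
  have : ‖f x₀‖ ≤ 0 := ge_of_tendsto' htend key
  exact hfx₀ (norm_le_zero_iff.mp this)

/-- Fiber constancy: a continuous eigenfunction (with `‖lam‖ ≥ 1`) takes equal values on
points of `X` with the same positive part. -/
lemma fiber_const {X : Set (ℤ → A)} (hX : IsShiftZ X) {f : (ℤ → A) → ℂ} {lam : ℂ}
    (hfc : ContinuousOn f X) (hlam : 1 ≤ ‖lam‖)
    (heig : ∀ x ∈ X, f (shiftZ x) = lam * f x) {x x' : ℤ → A} (hx : x ∈ X) (hx' : x' ∈ X)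
    (hpp : plusSeq x = plusSeq x') : f x = f x' := by
  by_contra hne
  set ε := ‖f x - f x'‖ with hε
  have hεpos : 0 < ε := by
    rw [hε, norm_pos_iff]
    exact sub_ne_zero_of_ne hne
  set p : ℕ → (ℤ → A) × (ℤ → A) := fun n => (shiftZ^[n] x, shiftZ^[n] x') with hp
  set T : Set ((ℤ → A) × (ℤ → A)) :=
    (X ×ˢ X) ∩ (fun q : (ℤ → A) × (ℤ → A) => f q.1 - f q.2) ⁻¹' {z : ℂ | ε ≤ ‖z‖} with hT
  have hgc : ContinuousOn (fun q : (ℤ → A) × (ℤ → A) => f q.1 - f q.2) (X ×ˢ X) := by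
    apply ContinuousOn.sub
    · exact hfc.comp continuous_fst.continuousOn (fun q hq => hq.1)
    · exact hfc.comp continuous_snd.continuousOn (fun q hq => hq.2)
  have hTclosed : IsClosed T :=
    hgc.preimage_isClosed_of_isClosed (hX.1.prod hX.1)
      (isClosed_le continuous_const continuous_norm)
  have hpT : ∀ n, p n ∈ T := by
    intro n
    refine ⟨⟨shiftZ_iterate_mem hX hx n, shiftZ_iterate_mem hX hx' n⟩, ?_⟩
    show ε ≤ ‖f (shiftZ^[n] x) - f (shiftZ^[n] x')‖
    rw [eig_iterate hX heig n hx, eig_iterate hX heig n hx', ← mul_sub, norm_mul, norm_pow]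
    calc ε = 1 * ε := (one_mul ε).symm
    _ ≤ ‖lam‖ ^ n * ε := by
        apply mul_le_mul_of_nonneg_right _ hεpos.le
        exact one_le_pow₀ hlam
  have hTcomp : IsCompact T := hTclosed.isCompact
  have hle : Filter.map p Filter.atTop ≤ Filter.principal T := by
    rw [Filter.le_principal_iff, Filter.mem_map]
    exact Filter.univ_mem' hpT
  obtain ⟨q, hqT, hq⟩ := hTcomp.exists_clusterPt hle
  have heq : q.1 = q.2 := by
    funext i
    have hCclosed : IsClosed {r : (ℤ → A) × (ℤ → A) | r.1 i = r.2 i} :=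
      isClosed_eq ((continuous_apply i).comp continuous_fst)
        ((continuous_apply i).comp continuous_snd)
    have hev : ∀ᶠ n in Filter.atTop, p n ∈ {r : (ℤ → A) × (ℤ → A) | r.1 i = r.2 i} := by
      filter_upwards [Filter.eventually_ge_atTop (-i).toNat] with n hn
      show (shiftZ^[n] x) i = (shiftZ^[n] x') i
      rw [shiftZ_iterate, shiftZ_iterate]
      have hnn : 0 ≤ i + n := by
        have : (-i : ℤ) ≤ ((-i).toNat : ℤ) := Int.self_le_toNat _
        omega
      have : x ((i + n).toNat : ℤ) = x' ((i + n).toNat : ℤ) := congrFun hpp (i + n).toNat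
      rwa [Int.toNat_of_nonneg hnn] at this
    have : ClusterPt q (Filter.principal {r : (ℤ → A) × (ℤ → A) | r.1 i = r.2 i}) :=
      hq.mono (Filter.le_principal_iff.mpr hev)
    have := mem_closure_iff_clusterPt.mpr this
    rwa [hCclosed.closure_eq] at this
  have : ε ≤ ‖f q.1 - f q.2‖ := hqT.2
  rw [heq, sub_self, norm_zero] at this
  exact absurd this (not_le.mpr hεpos)

end Aux18

/-- for a recurrent shift space `X`, the continuous spectra of
`X` and of `X⁺` coincide. -/
theorem stmt18 {A : Type*} [Fintype A] [TopologicalSpace A] [DiscreteTopology A]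
    (X : Set (ℤ → A)) (hX : IsShiftZ X)
    (hrec : ∃ x ∈ X, ∀ y ∈ X, y ∈ closure {z : ℤ → A | ∃ n : ℕ, ∀ i, z i = x (i + n)})
    (lam : ℂ) :
    ContEigZ X lam ↔ ContEigN (SetPlus X) lam := by
  constructor
  · rintro ⟨f, hfc, hnz, heig⟩
    have hlam : 1 ≤ ‖lam‖ := one_le_norm_lam hX hfc hnz heig
    -- the induced function on X⁺
    set g : (ℕ → A) → ℂ := fun y =>
      if h : y ∈ SetPlus X then f h.choose else 0 with hgdef
    have hg_eq : ∀ x ∈ X, g (plusSeq x) = f x := by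
      intro x hx
      have hmem : plusSeq x ∈ SetPlus X := ⟨x, hx, rfl⟩
      rw [hgdef]
      simp only [dif_pos hmem]
      exact fiber_const hX hfc hlam heig hmem.choose_spec.1 hx hmem.choose_spec.2
    -- X is compact, so plusSeq : X → X⁺ is a quotient map
    have hcompX : IsCompact X := hX.1.isCompact
    haveI : CompactSpace X := isCompact_iff_compactSpace.mp hcompX
    set π : X → SetPlus X := fun x => ⟨plusSeq x.1, ⟨x.1, x.2, rfl⟩⟩ with hπdef
    have hπc : Continuous π :=
      (continuous_plusSeq.comp continuous_subtype_val).subtype_mk _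
    have hπs : Function.Surjective π := by
      rintro ⟨y, x, hx, hxy⟩
      exact ⟨⟨x, hx⟩, Subtype.ext hxy⟩
    have hq : Topology.IsQuotientMap π := Topology.IsQuotientMap.of_surjective_continuous hπs hπc
    refine ⟨g, ?_, ?_, ?_⟩
    · rw [continuousOn_iff_continuous_restrict]
      rw [hq.continuous_iff]
      have : (SetPlus X).domRestrict g ∘ π = X.domRestrict f := by
        funext x
        exact hg_eq x.1 x.2
      rw [this]
      exact continuousOn_iff_continuous_restrict.mp hfc
    · obtain ⟨x₀, hx₀, hfx₀⟩ := hnz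
      exact ⟨plusSeq x₀, ⟨x₀, hx₀, rfl⟩, by rw [hg_eq x₀ hx₀]; exact hfx₀⟩
    · rintro y ⟨x, hx, rfl⟩
      rw [← plusSeq_shiftZ, hg_eq _ (shiftZ_mem hX hx), hg_eq _ hx]
      exact heig x hx
  · rintro ⟨g, hgc, hnz, heig⟩
    refine ⟨g ∘ plusSeq, ?_, ?_, ?_⟩
    · exact hgc.comp continuous_plusSeq.continuousOn (fun x hx => ⟨x, hx, rfl⟩)
    · obtain ⟨y, ⟨x, hx, rfl⟩, hgy⟩ := hnz
      exact ⟨x, hx, hgy⟩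
    · intro x hx
      show g (plusSeq (shiftZ x)) = lam * g (plusSeq x)
      rw [plusSeq_shiftZ]
      exact heig (plusSeq x) ⟨x, hx, rfl⟩
end
end
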